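/- Suppose there exist C > 0 and ρ > 0 such that for every n ≥ 1 the closed absolutely convex hull acx(Φ(Ω)) admits an (n, C·n^{−ρ−1/2})-cover. Let β ∈ [0,∞), γ ∈ (0,1], f ∈ H, and let (x_i)_{i≥1} be a weak β-greedy sequence for f with parameter γ. Then for every n ≥ 1: min_{n+1 ≤ i ≤ 2n} ‖r_i‖_∞ ≤ (C·√5)^{1/max(1,β)} · γ^{−1} · (n^{−ρ − β/2})^{1/max(1,β)} · ‖r_{n+1}‖_H. -/

import Mathlib

open scoped RealInnerProductSpace

variable {H : Type*} [NormedAddCommGroup H] [InnerProductSpace ℝ H] {Ω : Type*}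

/-- The kernel interpolant `I_X f`: the orthogonal projection of `f` onto
`V(X) = span {Φ(x) : x ∈ X}`. -/
noncomputable def interp (Φ : Ω → H) (X : Finset Ω) (f : H) : H :=
  haveI : FiniteDimensional ℝ (Submodule.span ℝ (Φ '' (X : Set Ω))) :=
    FiniteDimensional.span_of_finite ℝ (X.finite_toSet.image Φ)
  (Submodule.orthogonalProjectionOnto (Submodule.span ℝ (Φ '' (X : Set Ω))) f : H)

/-- The power function `P_X(z) = ‖Φ(z) − Π_{V(X)} Φ(z)‖`. -/
noncomputable def powerFun (Φ : Ω → H) (X : Finset Ω) (z : Ω) : ℝ :=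
  ‖Φ z - interp Φ X (Φ z)‖

/-- The sup norm `‖g‖_∞ = sup_{x ∈ Ω} |g(x)|`, where `g(x) = ⟪g, Φ(x)⟫`. -/
noncomputable def supNorm (Φ : Ω → H) (g : H) : ℝ := ⨆ x : Ω, |⟪g, Φ x⟫|

/-- `X_i = {x_1, …, x_i}` (so `X_0 = ∅`). -/
noncomputable def Xset (x : ℕ → Ω) (i : ℕ) : Finset Ω := by
  classical exact (Finset.Icc 1 i).image x

/-- `(x_i)_{i ≥ 1}` is a weak β-greedy sequence for `f` with parameter `γ`:
for every `i ≥ 0` and `z ∈ Ω`,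
`γ · |r_i(z)|^β · P_{X_i}(z)^{1−β} ≤ |r_i(x_{i+1})|^β · P_{X_i}(x_{i+1})^{1−β}`,
where `r_i = f − I_{X_i} f`. -/
def IsWeakGreedy (Φ : Ω → H) (f : H) (β γ : ℝ) (x : ℕ → Ω) : Prop :=
  ∀ (i : ℕ) (z : Ω),
    γ * |⟪f - interp Φ (Xset x i) f, Φ z⟫| ^ β * powerFun Φ (Xset x i) z ^ (1 - β)
      ≤ |⟪f - interp Φ (Xset x i) f, Φ (x (i + 1))⟫| ^ β
          * powerFun Φ (Xset x i) (x (i + 1)) ^ (1 - β)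

/-- The closed absolutely convex (symmetric convex) hull of `K`. -/
def acx (K : Set H) : Set H :=
  closure {y : H | ∃ (m : ℕ) (c : Fin m → ℝ) (g : Fin m → H),
    (∀ j, g j ∈ K) ∧ (∑ j, |c j|) ≤ 1 ∧ y = ∑ j, c j • g j}

/-- `S` admits an `(n, ε)`-cover: it can be covered by at most `2^n` closed balls of
radius `ε`. -/
def HasCover (S : Set H) (n : ℕ) (ε : ℝ) : Prop :=
  ∃ (q : ℕ) (y : Fin q → H), q ≤ 2 ^ n ∧ S ⊆ ⋃ j, Metric.closedBall (y j) ε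



/-! ### Auxiliary lemmas -/

section Basics

variable (Φ : Ω → H) (X : Finset Ω) (f : H)

lemma interp_fd : FiniteDimensional ℝ (Submodule.span ℝ (Φ '' (X : Set Ω))) :=
  FiniteDimensional.span_of_finite ℝ (X.finite_toSet.image Φ)

lemma interp_mem : interp Φ X f ∈ Submodule.span ℝ (Φ '' (X : Set Ω)) := by
  haveI := interp_fd Φ X
  exact (Submodule.orthogonalProjectionOnto (Submodule.span ℝ (Φ '' (X : Set Ω))) f).2

lemma sub_interp_mem_orthogonal :
    f - interp Φ X f ∈ (Submodule.span ℝ (Φ '' (X : Set Ω)))ᗮ := by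
  haveI := interp_fd Φ X
  exact Submodule.sub_starProjection_mem_orthogonal f

lemma inner_sub_interp_eq_zero {w : H} (hw : w ∈ Submodule.span ℝ (Φ '' (X : Set Ω))) :
    ⟪f - interp Φ X f, w⟫ = 0 := by
  have h := sub_interp_mem_orthogonal Φ X f
  rw [Submodule.mem_orthogonal] at h
  rw [real_inner_comm]
  exact h w hw

lemma norm_sub_interp_le {w : H} (hw : w ∈ Submodule.span ℝ (Φ '' (X : Set Ω))) :
    ‖f - interp Φ X f‖ ≤ ‖f - w‖ := by
  have hdecomp : f - w = (f - interp Φ X f) + (interp Φ X f - w) := by abel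
  have horth : ⟪f - interp Φ X f, interp Φ X f - w⟫ = 0 :=
    inner_sub_interp_eq_zero Φ X f (Submodule.sub_mem _ (interp_mem Φ X f) hw)
  have h := norm_add_sq_real (f - interp Φ X f) (interp Φ X f - w)
  rw [horth] at h
  have h2 : ‖f - w‖ ^ 2 = ‖f - interp Φ X f‖ ^ 2 + ‖interp Φ X f - w‖ ^ 2 := by
    rw [hdecomp, h]; ring
  have := sq_nonneg ‖interp Φ X f - w‖
  nlinarith [norm_nonneg (f - w), norm_nonneg (f - interp Φ X f)]

lemma abs_inner_le_powerFun (g : H) (hg : g ∈ (Submodule.span ℝ (Φ '' (X : Set Ω)))ᗮ) (z : Ω) :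
    |⟪g, Φ z⟫| ≤ ‖g‖ * powerFun Φ X z := by
  have h1 : ⟪g, Φ z⟫ = ⟪g, Φ z - interp Φ X (Φ z)⟫ := by
    rw [inner_sub_right]
    have : ⟪g, interp Φ X (Φ z)⟫ = 0 := by
      rw [Submodule.mem_orthogonal] at hg
      rw [real_inner_comm]; exact hg _ (interp_mem Φ X (Φ z))
    rw [this]; ring
  rw [h1, powerFun]
  exact abs_real_inner_le_norm _ _

lemma powerFun_nonneg (z : Ω) : 0 ≤ powerFun Φ X z := norm_nonneg _

lemma powerFun_le_one (hΦ : ∀ z : Ω, ‖Φ z‖ ≤ 1) (z : Ω) : powerFun Φ X z ≤ 1 := by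
  have := norm_sub_interp_le Φ X (Φ z) (Submodule.zero_mem _)
  rw [sub_zero] at this
  exact this.trans (hΦ z)

end Basics

section GammaAux
open Real Nat

lemma bern3 (k : ℕ) (hk : 1 ≤ k) : (3 : ℝ) * (k : ℝ) ^ k ≤ ((k : ℝ) + 2) ^ k := by
  have hk0 : (0:ℝ) < k := by exact_mod_cast hk
  have ha : (-2:ℝ) ≤ 2 / (k:ℝ) := by
    have h0 : (0:ℝ) ≤ 2 / (k:ℝ) := by positivity
    linarith
  have hb := one_add_mul_le_pow ha k
  have h3 : (3:ℝ) ≤ (1 + 2 / (k:ℝ)) ^ k := by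
    have heq : 1 + (k:ℝ) * (2 / k) = 3 := by field_simp; ring
    linarith [heq ▸ hb]
  have hpow : ((k:ℝ) + 2) ^ k = (1 + 2 / (k:ℝ)) ^ k * (k:ℝ) ^ k := by
    rw [← mul_pow]; congr 1; field_simp
  rw [hpow]
  nlinarith [pow_pos hk0 k]

lemma sqrt3_ge : (1.7 : ℝ) ≤ Real.sqrt 3 := by
  nlinarith [Real.sq_sqrt (by norm_num : (0:ℝ) ≤ 3), Real.sqrt_nonneg 3]

lemma sqrt_pow_le_sqrt_pow (k : ℕ) (hk : 1 ≤ k) :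
    Real.sqrt 3 * Real.sqrt k ^ k ≤ Real.sqrt ((k:ℝ) + 2) ^ k := by
  have hk0 : (0:ℝ) ≤ k := by positivity
  have h1 : (Real.sqrt 3 * Real.sqrt k ^ k) ^ 2 = 3 * (k:ℝ) ^ k := by
    rw [mul_pow, ← pow_mul, mul_comm k 2, pow_mul, Real.sq_sqrt (by norm_num),
      Real.sq_sqrt hk0]
  have h2 : (Real.sqrt ((k:ℝ)+2) ^ k) ^ 2 = ((k:ℝ) + 2) ^ k := by
    rw [← pow_mul, mul_comm k 2, pow_mul, Real.sq_sqrt (by positivity)]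
  have hle : (Real.sqrt 3 * Real.sqrt k ^ k) ^ 2 ≤ (Real.sqrt ((k:ℝ)+2) ^ k) ^ 2 := by
    rw [h1, h2]; exact bern3 k hk
  have ha : 0 ≤ Real.sqrt 3 * Real.sqrt k ^ k := by positivity
  have hb : 0 ≤ Real.sqrt ((k:ℝ)+2) ^ k := by positivity
  nlinarith

lemma gammaIneq : ∀ n : ℕ, 1 ≤ n →
    (n ! : ℝ) * Real.sqrt π ^ n ≤ (Real.sqrt 5 * Real.sqrt n) ^ n * Real.Gamma ((n : ℝ) / 2 + 1) := by
  intro n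
  induction n using Nat.strong_induction_on with
  | _ n ih =>
    match n with
    | 0 => intro h; omega
    | 1 =>
      intro _
      have hΓ : Real.Gamma (((1:ℕ):ℝ) / 2 + 1) = Real.sqrt π / 2 := by
        rw [show (((1:ℕ):ℝ) / 2 + 1) = 1/2 + 1 by norm_num, Real.Gamma_add_one (by norm_num),
          Real.Gamma_one_half_eq]
        ring
      rw [hΓ]
      simp only [Nat.factorial_one, Nat.cast_one, pow_one, Real.sqrt_one, mul_one]
      have h5 : (2:ℝ) ≤ Real.sqrt 5 := by
        nlinarith [Real.sq_sqrt (by norm_num : (0:ℝ) ≤ 5), Real.sqrt_nonneg 5]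
      have hπ : 0 ≤ Real.sqrt π := Real.sqrt_nonneg _
      nlinarith
    | 2 =>
      intro _
      have hΓ : Real.Gamma (((2:ℕ):ℝ) / 2 + 1) = 1 := by
        norm_num [Real.Gamma_two]
      rw [hΓ, mul_one]
      have hπ2 : Real.sqrt π ^ 2 = π := Real.sq_sqrt Real.pi_nonneg
      have h2 : Real.sqrt ((2:ℕ):ℝ) ^ 2 = 2 := Real.sq_sqrt (by norm_num)
      have h5 : Real.sqrt 5 ^ 2 = 5 := Real.sq_sqrt (by norm_num)
      rw [mul_pow, hπ2, h5, h2]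
      have : ((2:ℕ)! : ℝ) = 2 := by norm_num
      rw [this]
      nlinarith [Real.pi_le_four]
    | (m+3) =>
      intro _
      have hk1 : 1 ≤ m + 1 := by omega
      set k := m + 1 with hkdef
      have IH := ih k (by omega) hk1
      have hk0 : (0:ℝ) < k := by positivity
      set G := Real.Gamma ((k:ℝ) / 2 + 1) with hG
      have hGpos : 0 < G := Real.Gamma_pos_of_pos (by positivity)
      have hcast : ((m + 3 : ℕ) : ℝ) = (k:ℝ) + 2 := by push_cast [hkdef]; ring
      have hfact : ((m+3)! : ℝ) = ((k:ℝ) + 2) * ((k:ℝ) + 1) * (k ! : ℝ) := by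
        have h : (m+3)! = (m+3) * ((m+2) * (m+1)!) := by
          rw [Nat.factorial_succ, Nat.factorial_succ]
        rw [h]
        push_cast [hkdef]
        ring
      have hΓrec : Real.Gamma (((m+3:ℕ):ℝ) / 2 + 1) = ((k:ℝ)/2 + 1) * G := by
        rw [hcast, show ((k:ℝ)+2)/2 + 1 = ((k:ℝ)/2 + 1) + 1 by ring,
          Real.Gamma_add_one (by positivity)]
      have hsπ : Real.sqrt π ^ (m+3) = Real.sqrt π ^ k * π := by
        rw [show m + 3 = k + 2 by omega, pow_add, Real.sq_sqrt Real.pi_nonneg]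
      have e1 : Real.sqrt 5 ^ (k+2) = Real.sqrt 5 ^ k * 5 := by
        rw [pow_add, Real.sq_sqrt (by norm_num : (0:ℝ) ≤ 5)]
      have e2 : Real.sqrt ((k:ℝ)+2) ^ (k+2) = Real.sqrt ((k:ℝ)+2) ^ k * ((k:ℝ)+2) := by
        rw [pow_add, Real.sq_sqrt (by positivity)]
      have hRHSpow : (Real.sqrt 5 * Real.sqrt ((m+3:ℕ):ℝ)) ^ (m+3)
          = (Real.sqrt 5 ^ k * Real.sqrt ((k:ℝ)+2) ^ k) * (5 * ((k:ℝ)+2)) := by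
        rw [hcast, mul_pow, show m + 3 = k + 2 by omega, e1, e2]
        ring
      rw [hΓrec, hfact, hsπ, hRHSpow]
      have hskk : (0:ℝ) ≤ Real.sqrt (k:ℝ) ^ k := by positivity
      have h5k : (0:ℝ) ≤ Real.sqrt 5 ^ k := by positivity
      have hnum : ((k:ℝ)+1) * π ≤ 5 * Real.sqrt 3 * ((k:ℝ)/2 + 1) := by
        have h3 := sqrt3_ge
        have hπ := Real.pi_lt_d2
        have m1 := mul_le_mul_of_nonneg_left h3 (by positivity : (0:ℝ) ≤ 5*((k:ℝ)/2+1))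
        have m2 := mul_le_mul_of_nonneg_left hπ.le (by positivity : (0:ℝ) ≤ (k:ℝ)+1)
        nlinarith
      have hmono := sqrt_pow_le_sqrt_pow k hk1
      have key : ((k:ℝ)+1) * π * Real.sqrt (k:ℝ) ^ k
          ≤ 5 * ((k:ℝ)/2+1) * Real.sqrt ((k:ℝ)+2) ^ k := by
        calc ((k:ℝ)+1) * π * Real.sqrt (k:ℝ) ^ k
            ≤ (5 * Real.sqrt 3 * ((k:ℝ)/2 + 1)) * Real.sqrt (k:ℝ) ^ k :=
              mul_le_mul_of_nonneg_right hnum hskk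
          _ = (5 * ((k:ℝ)/2+1)) * (Real.sqrt 3 * Real.sqrt (k:ℝ) ^ k) := by ring
          _ ≤ (5 * ((k:ℝ)/2+1)) * Real.sqrt ((k:ℝ)+2) ^ k :=
              mul_le_mul_of_nonneg_left hmono (by positivity)
      calc ((k:ℝ)+2) * ((k:ℝ)+1) * (k ! : ℝ) * (Real.sqrt π ^ k * π)
          = (((k:ℝ)+2) * ((k:ℝ)+1) * π) * ((k ! : ℝ) * Real.sqrt π ^ k) := by ring
        _ ≤ (((k:ℝ)+2) * ((k:ℝ)+1) * π) * ((Real.sqrt 5 * Real.sqrt (k:ℝ)) ^ k * G) :=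
            mul_le_mul_of_nonneg_left IH (by positivity)
        _ = (((k:ℝ)+2) * Real.sqrt 5 ^ k * G) * (((k:ℝ)+1) * π * Real.sqrt (k:ℝ) ^ k) := by
            rw [mul_pow]; ring
        _ ≤ (((k:ℝ)+2) * Real.sqrt 5 ^ k * G) * (5 * ((k:ℝ)/2+1) * Real.sqrt ((k:ℝ)+2) ^ k) :=
            mul_le_mul_of_nonneg_left key (by positivity)
        _ = Real.sqrt 5 ^ k * Real.sqrt ((k:ℝ)+2) ^ k * (5 * ((k:ℝ)+2)) * (((k:ℝ)/2+1) * G) := by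
            ring

end GammaAux

section EntropyAux
open MeasureTheory
open scoped ENNReal

lemma entropy_prod_bound (n : ℕ) (hn : 1 ≤ n) (ε : ℝ) (hε : 0 ≤ ε) (K : Set H)
    (hcov : HasCover (acx K) n ε) (u v : Fin n → H)
    (hu : ∀ k, u k ∈ K) (hv : Orthonormal ℝ v)
    (htri : ∀ j k : Fin n, k < j → ⟪v j, u k⟫ = 0) :
    ∏ k, |⟪v k, u k⟫| ≤ (Real.sqrt 5 * Real.sqrt n * ε) ^ n := by
  classical
  haveI : Nonempty (Fin n) := ⟨⟨0, by omega⟩⟩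
  obtain ⟨q, y, hq, hsub⟩ := hcov
  -- the coordinate map T
  set T : H →ₗ[ℝ] EuclideanSpace ℝ (Fin n) :=
    { toFun := fun h => (WithLp.toLp 2 (fun j => ⟪v j, h⟫) : EuclideanSpace ℝ (Fin n))
      map_add' := by
        intro a b
        ext j
        simp [inner_add_right]
      map_smul' := by
        intro r a
        ext j
        simp [inner_smul_right] } with hT
  have hTapp : ∀ (h : H) (j : Fin n), T h j = ⟪v j, h⟫ := fun h j => rfl
  have hTnorm : ∀ h : H, ‖T h‖ ≤ ‖h‖ := by
    intro h
    rw [EuclideanSpace.norm_eq]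
    have hb : ∑ j, ‖(T h) j‖ ^ 2 ≤ ‖h‖ ^ 2 := by
      simpa [hTapp] using hv.sum_inner_products_le (s := Finset.univ) h
    calc Real.sqrt (∑ j, ‖(T h) j‖ ^ 2) ≤ Real.sqrt (‖h‖ ^ 2) := Real.sqrt_le_sqrt hb
      _ = ‖h‖ := Real.sqrt_sq (norm_nonneg _)
  -- the synthesis map M
  set M : EuclideanSpace ℝ (Fin n) →ₗ[ℝ] H :=
    { toFun := fun c => ∑ i, c i • u i
      map_add' := by
        intro a b
        simp [add_smul, Finset.sum_add_distrib]
      map_smul' := by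
        intro r a
        simp [smul_smul, Finset.smul_sum] } with hM
  set L : EuclideanSpace ℝ (Fin n) →ₗ[ℝ] EuclideanSpace ℝ (Fin n) := T.comp M with hL
  -- determinant
  set b : Module.Basis (Fin n) ℝ (EuclideanSpace ℝ (Fin n)) :=
    (EuclideanSpace.basisFun (Fin n) ℝ).toBasis with hb
  have hMb : ∀ j : Fin n, M (b j) = u j := by
    intro j
    have hbj : (b j : EuclideanSpace ℝ (Fin n)) = EuclideanSpace.single j 1 := by
      rw [hb, OrthonormalBasis.coe_toBasis, EuclideanSpace.basisFun_apply]
    show ∑ i, (b j) i • u i = u j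
    rw [hbj]
    rw [Finset.sum_eq_single j]
    · simp [EuclideanSpace.single_apply]
    · intro i _ hij
      simp [EuclideanSpace.single_apply, hij]
    · simp
  have hmat : ∀ i j : Fin n, LinearMap.toMatrix b b L i j = ⟪v i, u j⟫ := by
    intro i j
    rw [LinearMap.toMatrix_apply]
    have : L (b j) = T (u j) := by rw [hL, LinearMap.comp_apply, hMb]
    rw [this]
    rw [hb, OrthonormalBasis.coe_toBasis_repr_apply, EuclideanSpace.basisFun_repr]
    exact hTapp _ _
  have hdet : LinearMap.det L = ∏ k, ⟪v k, u k⟫ := by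
    rw [← LinearMap.det_toMatrix b]
    rw [Matrix.det_of_upperTriangular]
    · exact Finset.prod_congr rfl fun k _ => hmat k k
    · intro i j hij
      rw [hmat]
      exact htri i j hij
  have habs : |LinearMap.det L| = ∏ k, |⟪v k, u k⟫| := by
    rw [hdet, Finset.abs_prod]
  -- the cross polytope and its volume
  set Q : Set (EuclideanSpace ℝ (Fin n)) := {c | ∑ i, |c i| ≤ 1} with hQ
  have hQ'meas : MeasurableSet {x : Fin n → ℝ | ∑ i, |x i| ≤ 1} := by
    have hc : Continuous (fun x : Fin n → ℝ => ∑ i, |x i|) :=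
      continuous_finset_sum _ fun i _ => (continuous_apply i).abs
    exact (isClosed_le hc continuous_const).measurableSet
  have hQvol : volume Q = ENNReal.ofReal (2 ^ n / n.factorial) := by
    have hpre : Q = (MeasurableEquiv.toLp 2 (Fin n → ℝ)).symm ⁻¹' {x : Fin n → ℝ | ∑ i, |x i| ≤ 1} :=
      rfl
    rw [hpre, (EuclideanSpace.volume_preserving_symm_measurableEquiv_toLp (Fin n)).measure_preimage
      hQ'meas.nullMeasurableSet]
    have h1 := MeasureTheory.volume_sum_rpow_le (ι := Fin n) (p := 1) le_rfl 1
    have hseteq : {x : Fin n → ℝ | (∑ i, |x i| ^ (1:ℝ)) ^ (1 / (1:ℝ)) ≤ 1}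
        = {x : Fin n → ℝ | ∑ i, |x i| ≤ 1} := by
      ext x
      simp [Real.rpow_one]
    rw [hseteq] at h1
    rw [h1]
    have hg : Real.Gamma (1 / (1:ℝ) + 1) = 1 := by
      norm_num [Real.Gamma_two]
    have hg2 : Real.Gamma ((Fintype.card (Fin n) : ℝ) / 1 + 1) = (n.factorial : ℝ) := by
      rw [Fintype.card_fin, div_one, Real.Gamma_nat_eq_factorial]
    rw [hg, hg2, Fintype.card_fin]
    simp [ENNReal.ofReal_one]
  -- image of Q under L is covered
  have himg : L '' Q ⊆ ⋃ j, Metric.closedBall (T (y j)) ε := by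
    rintro _ ⟨c, hc, rfl⟩
    have hMc : M c ∈ acx K := by
      apply subset_closure
      exact ⟨n, (fun i => c i), u, hu, hc, rfl⟩
    obtain ⟨s, ⟨j, rfl⟩, hjmem⟩ := hsub hMc
    refine Set.mem_iUnion.2 ⟨j, ?_⟩
    rw [Metric.mem_closedBall] at hjmem ⊢
    have : L c = T (M c) := rfl
    rw [this, dist_eq_norm, ← map_sub]
    calc ‖T (M c - y j)‖ ≤ ‖M c - y j‖ := hTnorm _
      _ ≤ ε := by rwa [← dist_eq_norm]
  -- volume estimates
  have hvol1 : volume (L '' Q) = ENNReal.ofReal |LinearMap.det L| * volume Q :=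
    Measure.addHaar_image_linearMap volume L Q
  have hvol2 : volume (⋃ j, Metric.closedBall (T (y j)) ε)
      ≤ (2:ℝ≥0∞) ^ n * (ENNReal.ofReal ε ^ n
          * ENNReal.ofReal (Real.sqrt Real.pi ^ n / Real.Gamma ((n:ℝ) / 2 + 1))) := by
    calc volume (⋃ j, Metric.closedBall (T (y j)) ε)
        ≤ ∑' j : Fin q, volume (Metric.closedBall (T (y j)) ε) := measure_iUnion_le _
      _ = ∑ j : Fin q, volume (Metric.closedBall (T (y j)) ε) := tsum_fintype _
      _ = ∑ j : Fin q, (ENNReal.ofReal ε ^ n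
            * ENNReal.ofReal (Real.sqrt Real.pi ^ n / Real.Gamma ((n:ℝ) / 2 + 1))) := by
          refine Finset.sum_congr rfl fun j _ => ?_
          rw [EuclideanSpace.volume_closedBall]
          simp [Fintype.card_fin]
      _ = (q : ℝ≥0∞) * _ := by rw [Finset.sum_const, Finset.card_univ, Fintype.card_fin,
            nsmul_eq_mul]
      _ ≤ (2:ℝ≥0∞) ^ n * _ := by
          apply mul_le_mul_left
          exact_mod_cast Nat.cast_le.mpr hq
  have hchain : ENNReal.ofReal ((∏ k, |⟪v k, u k⟫|) * (2 ^ n / n.factorial))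
      ≤ ENNReal.ofReal (2 ^ n * (ε ^ n * (Real.sqrt Real.pi ^ n / Real.Gamma ((n:ℝ) / 2 + 1)))) := by
    have hprodnn : (0:ℝ) ≤ ∏ k, |⟪v k, u k⟫| := Finset.prod_nonneg fun k _ => abs_nonneg _
    rw [ENNReal.ofReal_mul hprodnn, ← habs, ← hQvol, ← hvol1]
    calc volume (L '' Q) ≤ volume (⋃ j, Metric.closedBall (T (y j)) ε) := measure_mono himg
      _ ≤ (2:ℝ≥0∞) ^ n * (ENNReal.ofReal ε ^ n
            * ENNReal.ofReal (Real.sqrt Real.pi ^ n / Real.Gamma ((n:ℝ) / 2 + 1))) := hvol2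
      _ = ENNReal.ofReal (2 ^ n * (ε ^ n * (Real.sqrt Real.pi ^ n / Real.Gamma ((n:ℝ) / 2 + 1)))) := by
          rw [ENNReal.ofReal_mul (by positivity), ENNReal.ofReal_mul (by positivity),
            ENNReal.ofReal_pow hε, ENNReal.ofReal_pow (by norm_num : (0:ℝ) ≤ 2)]
          norm_num
  -- back to the reals
  have hΓpos : 0 < Real.Gamma ((n:ℝ) / 2 + 1) := Real.Gamma_pos_of_pos (by positivity)
  have hreal : (∏ k, |⟪v k, u k⟫|) * (2 ^ n / n.factorial)
      ≤ 2 ^ n * (ε ^ n * (Real.sqrt Real.pi ^ n / Real.Gamma ((n:ℝ) / 2 + 1))) := by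
    have h := (ENNReal.ofReal_le_ofReal_iff (by positivity)).mp hchain
    exact h
  have hfacpos : (0:ℝ) < n.factorial := by exact_mod_cast Nat.factorial_pos n
  have h2pos : (0:ℝ) < 2 ^ n := by positivity
  -- D ≤ ε^n * n! * √π^n / Γ
  have hD : ∏ k, |⟪v k, u k⟫|
      ≤ ε ^ n * ((n.factorial : ℝ) * Real.sqrt Real.pi ^ n / Real.Gamma ((n:ℝ) / 2 + 1)) := by
    calc ∏ k, |⟪v k, u k⟫|
        = ((∏ k, |⟪v k, u k⟫|) * (2 ^ n / n.factorial)) * ((n.factorial : ℝ) / 2 ^ n) := by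
          field_simp
      _ ≤ (2 ^ n * (ε ^ n * (Real.sqrt Real.pi ^ n / Real.Gamma ((n:ℝ) / 2 + 1))))
            * ((n.factorial : ℝ) / 2 ^ n) :=
          mul_le_mul_of_nonneg_right hreal (by positivity)
      _ = ε ^ n * ((n.factorial : ℝ) * Real.sqrt Real.pi ^ n / Real.Gamma ((n:ℝ) / 2 + 1)) := by
          field_simp
  have hg : (n.factorial : ℝ) * Real.sqrt Real.pi ^ n / Real.Gamma ((n:ℝ) / 2 + 1)
      ≤ (Real.sqrt 5 * Real.sqrt n) ^ n := by
    rw [div_le_iff₀ hΓpos]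
    exact gammaIneq n hn
  calc ∏ k, |⟪v k, u k⟫|
      ≤ ε ^ n * ((n.factorial : ℝ) * Real.sqrt Real.pi ^ n / Real.Gamma ((n:ℝ) / 2 + 1)) := hD
    _ ≤ ε ^ n * (Real.sqrt 5 * Real.sqrt n) ^ n := mul_le_mul_of_nonneg_left hg (by positivity)
    _ = (Real.sqrt 5 * Real.sqrt n * ε) ^ n := by rw [mul_pow]; ring

end EntropyAux

lemma Xset_mono (x : ℕ → Ω) {i j : ℕ} (h : i ≤ j) : Xset x i ⊆ Xset x j := by
  classical
  intro a ha
  unfold Xset at ha ⊢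
  rw [Finset.mem_image] at ha ⊢
  obtain ⟨k, hk, rfl⟩ := ha
  exact ⟨k, Finset.Icc_subset_Icc_right h hk, rfl⟩

lemma Vset_mono (Φ : Ω → H) (x : ℕ → Ω) {i j : ℕ} (h : i ≤ j) :
    Submodule.span ℝ (Φ '' ((Xset x i : Finset Ω) : Set Ω))
      ≤ Submodule.span ℝ (Φ '' ((Xset x j : Finset Ω) : Set Ω)) :=
  Submodule.span_mono (Set.image_mono (Finset.coe_subset.mpr (Xset_mono x h)))

lemma phi_mem_Vset (Φ : Ω → H) (x : ℕ → Ω) {k i : ℕ} (hk1 : 1 ≤ k) (hki : k ≤ i) :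
    Φ (x k) ∈ Submodule.span ℝ (Φ '' ((Xset x i : Finset Ω) : Set Ω)) := by
  classical
  apply Submodule.subset_span
  refine ⟨x k, ?_, rfl⟩
  rw [Finset.mem_coe]
  unfold Xset
  rw [Finset.mem_image]
  exact ⟨k, Finset.mem_Icc.mpr ⟨hk1, hki⟩, rfl⟩

lemma residual_mono (Φ : Ω → H) (x : ℕ → Ω) (f : H) {i j : ℕ} (h : i ≤ j) :
    ‖f - interp Φ (Xset x j) f‖ ≤ ‖f - interp Φ (Xset x i) f‖ :=
  norm_sub_interp_le Φ (Xset x j) f (Vset_mono Φ x h (interp_mem Φ (Xset x i) f))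

/-- The per-index sup-norm bound coming from the weak greedy selection. -/
lemma per_index_bound [Nonempty Ω] (Φ : Ω → H) (hΦ : ∀ z : Ω, ‖Φ z‖ ≤ 1)
    (β γ : ℝ) (hβ : 0 ≤ β) (hγ0 : 0 < γ) (hγ1 : γ ≤ 1)
    (f : H) (x : ℕ → Ω) (hx : IsWeakGreedy Φ f β γ x) (i : ℕ) (R : ℝ)
    (hRi : ‖f - interp Φ (Xset x i) f‖ ≤ R) :
    supNorm Φ (f - interp Φ (Xset x i) f)
      ≤ γ⁻¹ * ((|⟪f - interp Φ (Xset x i) f, Φ (x (i+1))⟫| ^ β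
          * powerFun Φ (Xset x i) (x (i+1)) ^ (1 - β)) ^ (1 / max 1 β))
        * R ^ (1 - β / max 1 β) := by
  set rr := f - interp Φ (Xset x i) f with hrr
  set m := |⟪rr, Φ (x (i+1))⟫| ^ β * powerFun Φ (Xset x i) (x (i+1)) ^ (1 - β) with hm
  have hmnn : 0 ≤ m := mul_nonneg (Real.rpow_nonneg (abs_nonneg _) _)
    (Real.rpow_nonneg (powerFun_nonneg _ _ _) _)
  have hR0 : 0 ≤ R := le_trans (norm_nonneg _) hRi
  apply ciSup_le
  intro z
  have hrz : |⟪rr, Φ z⟫| ≤ ‖rr‖ * powerFun Φ (Xset x i) z :=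
    abs_inner_le_powerFun Φ (Xset x i) rr (sub_interp_mem_orthogonal Φ (Xset x i) f) z
  have hgreedy : γ * |⟪rr, Φ z⟫| ^ β * powerFun Φ (Xset x i) z ^ (1 - β) ≤ m := hx i z
  rcases le_or_gt β 1 with hβ1 | hβ1
  · -- case β ≤ 1, max 1 β = 1
    rw [max_eq_left hβ1]
    rw [show (1:ℝ)/1 = 1 by norm_num, Real.rpow_one, show (1 - β/1 : ℝ) = 1 - β by norm_num]
    by_cases hz0 : |⟪rr, Φ z⟫| = 0
    · rw [hz0]
      positivity
    have hzpos : 0 < |⟪rr, Φ z⟫| := lt_of_le_of_ne (abs_nonneg _) (Ne.symm hz0)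
    have hRipos : 0 < ‖rr‖ := by
      by_contra hc
      push_neg at hc
      have : ‖rr‖ = 0 := le_antisymm hc (norm_nonneg _)
      rw [this, zero_mul] at hrz
      linarith
    have hP : |⟪rr, Φ z⟫| / ‖rr‖ ≤ powerFun Φ (Xset x i) z := by
      rw [div_le_iff₀ hRipos, mul_comm]
      exact hrz
    have hPpow : (|⟪rr, Φ z⟫| / ‖rr‖) ^ (1 - β) ≤ powerFun Φ (Xset x i) z ^ (1 - β) :=
      Real.rpow_le_rpow (by positivity) hP (by linarith)
    have hchain : γ * |⟪rr, Φ z⟫| ^ β * (|⟪rr, Φ z⟫| / ‖rr‖) ^ (1 - β) ≤ m :=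
      le_trans (mul_le_mul_of_nonneg_left hPpow
        (by positivity : (0:ℝ) ≤ γ * |⟪rr, Φ z⟫| ^ β)) hgreedy
    have hsplit : |⟪rr, Φ z⟫| ^ β * (|⟪rr, Φ z⟫| / ‖rr‖) ^ (1 - β)
        = |⟪rr, Φ z⟫| / ‖rr‖ ^ (1 - β) := by
      rw [Real.div_rpow (abs_nonneg _) (norm_nonneg _), ← mul_div_assoc,
        ← Real.rpow_add hzpos]
      norm_num
    rw [mul_assoc, hsplit] at hchain
    have hchain2 : γ * |⟪rr, Φ z⟫| / ‖rr‖ ^ (1 - β) ≤ m := by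
      rw [mul_div_assoc]
      exact hchain
    have hRpow : ‖rr‖ ^ (1 - β) ≤ R ^ (1 - β) :=
      Real.rpow_le_rpow (norm_nonneg _) hRi (by linarith)
    have hRrpos : 0 < ‖rr‖ ^ (1 - β) := Real.rpow_pos_of_pos hRipos _
    rw [div_le_iff₀ hRrpos] at hchain2
    -- γ * |⟪rr, Φ z⟫| ≤ m * ‖rr‖^(1-β)
    calc |⟪rr, Φ z⟫| = γ⁻¹ * (γ * |⟪rr, Φ z⟫|) := by
          field_simp
      _ ≤ γ⁻¹ * (m * ‖rr‖ ^ (1 - β)) := by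
          apply mul_le_mul_of_nonneg_left hchain2 (by positivity)
      _ ≤ γ⁻¹ * (m * R ^ (1 - β)) := by
          apply mul_le_mul_of_nonneg_left (mul_le_mul_of_nonneg_left hRpow hmnn) (by positivity)
      _ = γ⁻¹ * m * R ^ (1 - β) := by ring
  · -- case 1 < β, max 1 β = β
    have hβpos : 0 < β := lt_of_lt_of_le one_pos hβ1.le
    rw [max_eq_right hβ1.le, div_self (ne_of_gt hβpos)]
    rw [sub_self, Real.rpow_zero, mul_one]
    by_cases hP0 : powerFun Φ (Xset x i) z = 0
    · have hz0 : |⟪rr, Φ z⟫| = 0 := by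
        rw [hP0, mul_zero] at hrz
        exact le_antisymm hrz (abs_nonneg _)
      rw [hz0]
      positivity
    have hPpos : 0 < powerFun Φ (Xset x i) z :=
      lt_of_le_of_ne (powerFun_nonneg _ _ _) (Ne.symm hP0)
    have hPexp : 1 ≤ powerFun Φ (Xset x i) z ^ (1 - β) :=
      Real.one_le_rpow_of_pos_of_le_one_of_nonpos hPpos (powerFun_le_one Φ (Xset x i) hΦ z)
        (by linarith)
    have h1 : γ * |⟪rr, Φ z⟫| ^ β ≤ m := by
      calc γ * |⟪rr, Φ z⟫| ^ β = γ * |⟪rr, Φ z⟫| ^ β * 1 := by ring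
        _ ≤ γ * |⟪rr, Φ z⟫| ^ β * powerFun Φ (Xset x i) z ^ (1 - β) :=
            mul_le_mul_of_nonneg_left hPexp (by positivity)
        _ ≤ m := hgreedy
    have h2 : |⟪rr, Φ z⟫| ^ β ≤ γ⁻¹ * m := by
      have h2a := mul_le_mul_of_nonneg_left h1 (le_of_lt (inv_pos.mpr hγ0))
      calc |⟪rr, Φ z⟫| ^ β = γ⁻¹ * (γ * |⟪rr, Φ z⟫| ^ β) := by field_simp
        _ ≤ γ⁻¹ * m := h2a
    have h3 : |⟪rr, Φ z⟫| = (|⟪rr, Φ z⟫| ^ β) ^ (1/β) := by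
      rw [← Real.rpow_mul (abs_nonneg _), mul_one_div, div_self (ne_of_gt hβpos),
        Real.rpow_one]
    rw [h3]
    calc (|⟪rr, Φ z⟫| ^ β) ^ (1/β) ≤ (γ⁻¹ * m) ^ (1/β) :=
        Real.rpow_le_rpow (Real.rpow_nonneg (abs_nonneg _) _) h2 (by positivity)
      _ = γ⁻¹ ^ (1/β) * m ^ (1/β) :=
        Real.mul_rpow (by positivity) hmnn
      _ ≤ γ⁻¹ * m ^ (1/β) := by
        apply mul_le_mul_of_nonneg_right _ (Real.rpow_nonneg hmnn _)
        have hγinv : 1 ≤ γ⁻¹ := by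
          rw [le_inv_comm₀ one_pos hγ0]
          simpa using hγ1
        calc γ⁻¹ ^ (1/β) ≤ γ⁻¹ ^ (1:ℝ) :=
            Real.rpow_le_rpow_of_exponent_le hγinv (by
              rw [div_le_one hβpos]; exact hβ1.le)
          _ = γ⁻¹ := Real.rpow_one _

theorem statement_7 [Nonempty Ω]
    (Φ : Ω → H) (hΦ : ∀ z : Ω, ‖Φ z‖ ≤ 1)
    (C ρ : ℝ) (hC : 0 < C) (hρ : 0 < ρ)
    (hcov : ∀ n : ℕ, 1 ≤ n →
      HasCover (acx (Set.range Φ)) n (C * (n : ℝ) ^ (-ρ - 1 / 2)))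
    (β γ : ℝ) (hβ : 0 ≤ β) (hγ0 : 0 < γ) (hγ1 : γ ≤ 1)
    (f : H) (x : ℕ → Ω) (hx : IsWeakGreedy Φ f β γ x) :
    ∀ n : ℕ, ∀ hn : 1 ≤ n,
      (Finset.Icc (n + 1) (2 * n)).inf' (Finset.nonempty_Icc.mpr (by omega))
          (fun i => supNorm Φ (f - interp Φ (Xset x i) f))
        ≤ (C * Real.sqrt 5) ^ (1 / max 1 β) * γ⁻¹
            * ((n : ℝ) ^ (-ρ - β / 2)) ^ (1 / max 1 β)
            * ‖f - interp Φ (Xset x (n + 1)) f‖ := by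
  intro n hn
  classical
  haveI : Nonempty (Fin n) := ⟨⟨0, by omega⟩⟩
  have hmem : (n+1) ∈ Finset.Icc (n+1) (2*n) := Finset.mem_Icc.mpr ⟨le_rfl, by omega⟩
  set R := ‖f - interp Φ (Xset x (n+1)) f‖ with hRdef
  by_cases hR0 : R = 0
  · rw [hR0, mul_zero]
    have hrz : f - interp Φ (Xset x (n+1)) f = 0 := norm_eq_zero.mp hR0
    calc (Finset.Icc (n + 1) (2 * n)).inf' (Finset.nonempty_Icc.mpr (by omega))
          (fun i => supNorm Φ (f - interp Φ (Xset x i) f))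
        ≤ supNorm Φ (f - interp Φ (Xset x (n+1)) f) :=
          Finset.inf'_le _ hmem
      _ = 0 := by
          rw [hrz]
          unfold supNorm
          simp
  · have hRpos : 0 < R := lt_of_le_of_ne (norm_nonneg _) (Ne.symm hR0)
    have hn0 : (0:ℝ) < n := by exact_mod_cast hn
    set ε := C * (n:ℝ) ^ (-ρ - 1/2 : ℝ) with hεdef
    have hεnn : (0:ℝ) ≤ ε := by positivity
    set A := C * Real.sqrt 5 * (n:ℝ) ^ (-ρ - β/2) * R ^ β with hAdef
    have hAnn : 0 ≤ A := by positivity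
    have claim1 : ∃ k : Fin n,
        |⟪f - interp Φ (Xset x (n+1+k)) f, Φ (x (n+1+k+1))⟫| ^ β
          * powerFun Φ (Xset x (n+1+k)) (x (n+1+k+1)) ^ (1-β) ≤ A := by
      by_contra hcon
      push_neg at hcon
      -- positivity of power function values
      have hppos : ∀ k : Fin n, 0 < powerFun Φ (Xset x (n+1+k)) (x (n+1+k+1)) := by
        intro k
        rcases (powerFun_nonneg Φ (Xset x (n+1+k)) (x (n+1+k+1))).lt_or_eq with h | h
        · exact h
        · exfalso
          have hq0 : |⟪f - interp Φ (Xset x (n+1+k)) f, Φ (x (n+1+k+1))⟫| = 0 := by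
            have h1 := abs_inner_le_powerFun Φ (Xset x (n+1+k)) _
              (sub_interp_mem_orthogonal Φ (Xset x (n+1+k)) f) (x (n+1+k+1))
            rw [← h, mul_zero] at h1
            exact le_antisymm h1 (abs_nonneg _)
          have hm0 : |⟪f - interp Φ (Xset x (n+1+k)) f, Φ (x (n+1+k+1))⟫| ^ β
              * powerFun Φ (Xset x (n+1+k)) (x (n+1+k+1)) ^ (1-β) = 0 := by
            by_cases hb0 : β = 0
            · rw [hb0, Real.rpow_zero, one_mul, show (1:ℝ) - 0 = 1 by norm_num,
                Real.rpow_one, ← h]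
            · rw [hq0, Real.zero_rpow hb0, zero_mul]
          have := hcon k
          rw [hm0] at this
          exact absurd this (not_lt.mpr hAnn)
      -- Newton basis
      set u : Fin n → H := fun k => Φ (x (n+1+k+1)) with hudef
      set w : Fin n → H := fun k => u k - interp Φ (Xset x (n+1+k)) (u k) with hwdef
      set v : Fin n → H := fun k =>
        (powerFun Φ (Xset x (n+1+k)) (x (n+1+k+1)))⁻¹ • w k with hvdef
      have hwnorm : ∀ k, ‖w k‖ = powerFun Φ (Xset x (n+1+k)) (x (n+1+k+1)) := fun k => rfl
      have hworth : ∀ k : Fin n,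
          w k ∈ (Submodule.span ℝ (Φ '' ((Xset x (n+1+(k:ℕ)) : Finset Ω) : Set Ω)))ᗮ :=
        fun k => sub_interp_mem_orthogonal Φ (Xset x (n+1+(k:ℕ))) (u k)
      have hvorth : ∀ k : Fin n,
          v k ∈ (Submodule.span ℝ (Φ '' ((Xset x (n+1+(k:ℕ)) : Finset Ω) : Set Ω)))ᗮ :=
        fun k => Submodule.smul_mem _ _ (hworth k)
      have humem : ∀ k : Fin n,
          u k ∈ Submodule.span ℝ (Φ '' ((Xset x (n+1+k+1) : Finset Ω) : Set Ω)) :=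
        fun k => phi_mem_Vset Φ x (by omega) le_rfl
      have hwmem : ∀ k : Fin n,
          w k ∈ Submodule.span ℝ (Φ '' ((Xset x (n+1+k+1) : Finset Ω) : Set Ω)) :=
        fun k => Submodule.sub_mem _ (humem k)
          (Vset_mono Φ x (by omega) (interp_mem Φ (Xset x (n+1+k)) (u k)))
      have hvmem : ∀ k : Fin n,
          v k ∈ Submodule.span ℝ (Φ '' ((Xset x (n+1+k+1) : Finset Ω) : Set Ω)) :=
        fun k => Submodule.smul_mem _ _ (hwmem k)
      have hvnorm : ∀ k, ‖v k‖ = 1 := by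
        intro k
        rw [hvdef]
        rw [norm_smul, Real.norm_eq_abs, abs_of_nonneg
          (inv_nonneg.mpr (powerFun_nonneg Φ _ _)), hwnorm k,
          inv_mul_cancel₀ (ne_of_gt (hppos k))]
      have hinner0 : ∀ a b : Fin n, (a:ℕ) < (b:ℕ) → ⟪v b, v a⟫ = 0 := by
        intro a b hab
        have h1 : v a ∈ Submodule.span ℝ (Φ '' ((Xset x (n+1+b) : Finset Ω) : Set Ω)) :=
          Vset_mono Φ x (by omega) (hvmem a)
        have h2 := hvorth b
        rw [Submodule.mem_orthogonal] at h2
        have h3 := h2 _ h1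
        rwa [real_inner_comm] at h3
      have horthonormal : Orthonormal ℝ v := by
        rw [orthonormal_iff_ite]
        intro a b
        by_cases hab : a = b
        · subst hab
          rw [if_pos rfl, real_inner_self_eq_norm_sq, hvnorm a]
          norm_num
        · rw [if_neg hab]
          rcases Ne.lt_or_gt hab with h | h
          · have := hinner0 a b h
            rwa [real_inner_comm] at this
          · exact hinner0 b a h
      have htri : ∀ j k : Fin n, k < j → ⟪v j, u k⟫ = 0 := by
        intro j k hkj
        have h1 : u k ∈ Submodule.span ℝ (Φ '' ((Xset x (n+1+j) : Finset Ω) : Set Ω)) :=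
          Vset_mono Φ x (by omega : n+1+(k:ℕ)+1 ≤ n+1+(j:ℕ)) (humem k)
        have h2 := hvorth j
        rw [Submodule.mem_orthogonal] at h2
        have h3 := h2 _ h1
        rwa [real_inner_comm] at h3
      have hwVzero : ∀ (k : Fin n) (y : H),
          y ∈ Submodule.span ℝ (Φ '' ((Xset x (n+1+k) : Finset Ω) : Set Ω)) → ⟪w k, y⟫ = 0 := by
        intro k y hy
        have h2 := hworth k
        rw [Submodule.mem_orthogonal] at h2
        have h3 := h2 _ hy
        rwa [real_inner_comm] at h3
      have hdiag : ∀ k : Fin n, ⟪v k, u k⟫ = powerFun Φ (Xset x (n+1+k)) (x (n+1+k+1)) := by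
        intro k
        rw [hvdef]
        rw [real_inner_smul_left]
        have huw : ⟪w k, u k⟫ = ‖w k‖ ^ 2 := by
          have hsplit : (u k : H) = w k + interp Φ (Xset x (n+1+(k:ℕ))) (u k) := by
            show (u k : H) = (u k - interp Φ (Xset x (n+1+(k:ℕ))) (u k))
              + interp Φ (Xset x (n+1+(k:ℕ))) (u k)
            abel
          calc ⟪w k, u k⟫ = ⟪w k, w k + interp Φ (Xset x (n+1+k)) (u k)⟫ := by rw [← hsplit]
            _ = ⟪w k, w k⟫ + ⟪w k, interp Φ (Xset x (n+1+k)) (u k)⟫ := inner_add_right _ _ _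
            _ = ‖w k‖ ^ 2 + 0 := by
                rw [real_inner_self_eq_norm_sq, hwVzero k _ (interp_mem Φ _ (u k))]
            _ = ‖w k‖ ^ 2 := add_zero _
        rw [huw, hwnorm k, sq, ← mul_assoc,
          inv_mul_cancel₀ (ne_of_gt (hppos k)), one_mul]
      -- inner products with the residual
      have htval : ∀ k : Fin n,
          ⟪v k, f - interp Φ (Xset x (n+1)) f⟫
            = (powerFun Φ (Xset x (n+1+k)) (x (n+1+k+1)))⁻¹
              * ⟪f - interp Φ (Xset x (n+1+k)) f, Φ (x (n+1+k+1))⟫ := by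
        intro k
        have hsplit : f - interp Φ (Xset x (n+1)) f
            = (f - interp Φ (Xset x (n+1+k)) f)
              + (interp Φ (Xset x (n+1+k)) f - interp Φ (Xset x (n+1)) f) := by abel
        have hmemv : (interp Φ (Xset x (n+1+k)) f - interp Φ (Xset x (n+1)) f)
            ∈ Submodule.span ℝ (Φ '' ((Xset x (n+1+k) : Finset Ω) : Set Ω)) :=
          Submodule.sub_mem _ (interp_mem Φ _ f)
            (Vset_mono Φ x (by omega) (interp_mem Φ _ f))
        have hv0 : ⟪v k, interp Φ (Xset x (n+1+k)) f - interp Φ (Xset x (n+1)) f⟫ = 0 := by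
          have h2 := hvorth k
          rw [Submodule.mem_orthogonal] at h2
          have h3 := h2 _ hmemv
          rwa [real_inner_comm] at h3
        rw [hsplit, inner_add_right, hv0, add_zero]
        rw [hvdef, real_inner_smul_left]
        congr 1
        have hrorth := sub_interp_mem_orthogonal Φ (Xset x (n+1+k)) f
        rw [Submodule.mem_orthogonal] at hrorth
        have hws : ⟪w k, f - interp Φ (Xset x (n+1+k)) f⟫
            = ⟪u k, f - interp Φ (Xset x (n+1+k)) f⟫ := by
          rw [hwdef, inner_sub_left]
          rw [hrorth _ (interp_mem Φ (Xset x (n+1+k)) (u k))]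
          ring
        rw [hws, real_inner_comm]
      have hBessel : ∑ k : Fin n, ⟪v k, f - interp Φ (Xset x (n+1)) f⟫ ^ 2 ≤ R ^ 2 := by
        have h := horthonormal.sum_inner_products_le (s := Finset.univ)
          (f - interp Φ (Xset x (n+1)) f)
        simpa [Real.norm_eq_abs, sq_abs, hRdef] using h
      -- entropy bound on the product of power function values
      have hprod_p : ∏ k : Fin n, powerFun Φ (Xset x (n+1+k)) (x (n+1+k+1))
          ≤ (Real.sqrt 5 * Real.sqrt n * ε) ^ n := by
        have h := entropy_prod_bound n hn ε hεnn (Set.range Φ) (hcov n hn) u v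
          (fun k => ⟨x (n+1+k+1), rfl⟩) horthonormal htri
        calc ∏ k : Fin n, powerFun Φ (Xset x (n+1+k)) (x (n+1+k+1))
            = ∏ k : Fin n, |⟪v k, u k⟫| := by
              refine Finset.prod_congr rfl fun k _ => ?_
              rw [hdiag k, abs_of_nonneg (powerFun_nonneg Φ _ _)]
          _ ≤ (Real.sqrt 5 * Real.sqrt n * ε) ^ n := h
      -- AM-GM on the Bessel coefficients
      set t : Fin n → ℝ := fun k => |⟪v k, f - interp Φ (Xset x (n+1)) f⟫| with htdef
      have htnn : ∀ k, 0 ≤ t k := fun k => abs_nonneg _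
      have hBessel' : ∑ k : Fin n, t k ^ 2 ≤ R ^ 2 := by
        calc ∑ k : Fin n, t k ^ 2 = ∑ k : Fin n, ⟪v k, f - interp Φ (Xset x (n+1)) f⟫ ^ 2 := by
              refine Finset.sum_congr rfl fun k _ => ?_
              rw [htdef, sq_abs]
          _ ≤ R ^ 2 := hBessel
      have hprodt2nn : (0:ℝ) ≤ ∏ k : Fin n, t k ^ 2 :=
        Finset.prod_nonneg fun k _ => sq_nonneg _
      have hAM : (∏ k : Fin n, t k ^ 2) ^ ((n:ℝ)⁻¹) ≤ R ^ 2 / n := by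
        have hgm := Real.geom_mean_le_arith_mean_weighted Finset.univ
          (fun _ : Fin n => (n:ℝ)⁻¹) (fun k => t k ^ 2)
          (fun _ _ => by positivity)
          (by
            rw [Finset.sum_const, Finset.card_univ, Fintype.card_fin, nsmul_eq_mul]
            field_simp)
          (fun k _ => sq_nonneg _)
        rw [Real.finset_prod_rpow _ _ (fun k _ => sq_nonneg _)] at hgm
        calc (∏ k : Fin n, t k ^ 2) ^ ((n:ℝ)⁻¹)
            ≤ ∑ k : Fin n, (n:ℝ)⁻¹ * t k ^ 2 := hgm
          _ = (n:ℝ)⁻¹ * ∑ k : Fin n, t k ^ 2 := by rw [Finset.mul_sum]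
          _ ≤ (n:ℝ)⁻¹ * R ^ 2 := mul_le_mul_of_nonneg_left hBessel' (by positivity)
          _ = R ^ 2 / n := by rw [inv_mul_eq_div]
      have hprod_t2 : ∏ k : Fin n, t k ^ 2 ≤ (R ^ 2 / n) ^ n := by
        have h1 : ((∏ k : Fin n, t k ^ 2) ^ ((n:ℝ)⁻¹)) ^ n ≤ (R ^ 2 / n) ^ n :=
          pow_le_pow_left₀ (Real.rpow_nonneg hprodt2nn _) hAM n
        rwa [Real.rpow_inv_natCast_pow hprodt2nn (by omega)] at h1
      have hprod_t : ∏ k : Fin n, t k ≤ (R / Real.sqrt n) ^ n := by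
        have hsq : (∏ k : Fin n, t k) ^ 2 = ∏ k : Fin n, t k ^ 2 := by
          rw [← Finset.prod_pow]
        have h2 : ((R:ℝ) / Real.sqrt n) ^ 2 = R ^ 2 / n := by
          rw [div_pow, Real.sq_sqrt hn0.le]
        have h3 : (∏ k : Fin n, t k) ^ 2 ≤ (((R:ℝ) / Real.sqrt n) ^ n) ^ 2 := by
          rw [hsq, ← pow_mul, mul_comm n 2, pow_mul, h2]
          exact hprod_t2
        have ha := Finset.prod_nonneg (fun k (_ : k ∈ Finset.univ) => htnn k)
        have hbnn : (0:ℝ) ≤ ((R:ℝ) / Real.sqrt n) ^ n := by positivity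
        nlinarith [h3, ha, hbnn]
      -- rewrite m in terms of t and p
      have hqt : ∀ k : Fin n, |⟪f - interp Φ (Xset x (n+1+k)) f, Φ (x (n+1+k+1))⟫|
          = t k * powerFun Φ (Xset x (n+1+k)) (x (n+1+k+1)) := by
        intro k
        show |⟪f - interp Φ (Xset x (n+1+(k:ℕ))) f, Φ (x (n+1+(k:ℕ)+1))⟫|
          = |⟪v k, f - interp Φ (Xset x (n+1)) f⟫|
            * powerFun Φ (Xset x (n+1+(k:ℕ))) (x (n+1+(k:ℕ)+1))
        rw [htval k, abs_mul, abs_of_nonneg (inv_nonneg.mpr (powerFun_nonneg Φ _ _))]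
        rw [mul_comm _ (|⟪f - interp Φ (Xset x (n+1+k)) f, Φ (x (n+1+k+1))⟫|), mul_assoc,
          inv_mul_cancel₀ (ne_of_gt (hppos k)), mul_one]
      have hmt : ∀ k : Fin n,
          |⟪f - interp Φ (Xset x (n+1+k)) f, Φ (x (n+1+k+1))⟫| ^ β
            * powerFun Φ (Xset x (n+1+k)) (x (n+1+k+1)) ^ (1-β)
          = t k ^ β * powerFun Φ (Xset x (n+1+k)) (x (n+1+k+1)) := by
        intro k
        rw [hqt k, Real.mul_rpow (htnn k) (powerFun_nonneg Φ _ _), mul_assoc,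
          ← Real.rpow_add (hppos k), show β + (1-β) = 1 by ring, Real.rpow_one]
      -- assemble the product bound
      have hcomm : (((R:ℝ) / Real.sqrt n) ^ n) ^ β = (((R:ℝ) / Real.sqrt n) ^ β) ^ n := by
        rw [← Real.rpow_natCast ((R:ℝ) / Real.sqrt n) n,
          ← Real.rpow_natCast (((R:ℝ) / Real.sqrt n) ^ β) n,
          ← Real.rpow_mul (by positivity), ← Real.rpow_mul (by positivity), mul_comm]
      have hAfac : ((R:ℝ) / Real.sqrt n) ^ β * (Real.sqrt 5 * Real.sqrt n * ε) = A := by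
        have h1 : ((R:ℝ) / Real.sqrt n) ^ β = R ^ β * (n:ℝ) ^ (-(β/2)) := by
          rw [Real.div_rpow hRpos.le (Real.sqrt_nonneg _), Real.sqrt_eq_rpow,
            ← Real.rpow_mul hn0.le, show 1/2*β = β/2 by ring, div_eq_mul_inv,
            ← Real.rpow_neg hn0.le]
        have h2 : Real.sqrt n * (n:ℝ) ^ (-ρ - 1/2 : ℝ) = (n:ℝ) ^ (-ρ) := by
          rw [Real.sqrt_eq_rpow, ← Real.rpow_add hn0, show 1/2 + (-ρ - 1/2) = -ρ by ring]
        rw [h1, hεdef]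
        rw [show R ^ β * (n:ℝ) ^ (-(β/2)) * (Real.sqrt 5 * Real.sqrt ↑n * (C * (n:ℝ) ^ (-ρ-1/2 : ℝ)))
            = C * Real.sqrt 5 * ((Real.sqrt ↑n * (n:ℝ) ^ (-ρ-1/2 : ℝ)) * (n:ℝ) ^ (-(β/2))) * R ^ β by
              ring, h2, ← Real.rpow_add hn0, show -ρ + -(β/2) = -ρ - β/2 by ring, hAdef]
      have hprod_m : ∏ k : Fin n, (t k ^ β * powerFun Φ (Xset x (n+1+k)) (x (n+1+k+1))) ≤ A ^ n := by
        calc ∏ k : Fin n, (t k ^ β * powerFun Φ (Xset x (n+1+k)) (x (n+1+k+1)))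
            = (∏ k : Fin n, t k ^ β) * ∏ k : Fin n, powerFun Φ (Xset x (n+1+k)) (x (n+1+k+1)) :=
              Finset.prod_mul_distrib
          _ = (∏ k : Fin n, t k) ^ β * ∏ k : Fin n, powerFun Φ (Xset x (n+1+k)) (x (n+1+k+1)) := by
              rw [Real.finset_prod_rpow _ _ (fun k _ => htnn k)]
          _ ≤ (((R:ℝ) / Real.sqrt n) ^ n) ^ β * (Real.sqrt 5 * Real.sqrt n * ε) ^ n := by
              apply mul_le_mul
              · exact Real.rpow_le_rpow (Finset.prod_nonneg fun k _ => htnn k) hprod_t hβ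
              · exact hprod_p
              · exact Finset.prod_nonneg fun k _ => powerFun_nonneg Φ _ _
              · positivity
          _ = (((R:ℝ) / Real.sqrt n) ^ β) ^ n * (Real.sqrt 5 * Real.sqrt n * ε) ^ n := by
              rw [hcomm]
          _ = (((R:ℝ) / Real.sqrt n) ^ β * (Real.sqrt 5 * Real.sqrt n * ε)) ^ n := by
              rw [← mul_pow]
          _ = A ^ n := by rw [hAfac]
      have hgt : A ^ n < ∏ k : Fin n, (t k ^ β * powerFun Φ (Xset x (n+1+k)) (x (n+1+k+1))) := by
        rcases hAnn.eq_or_lt with hA0 | hA0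
        · rw [← hA0, zero_pow (by omega : n ≠ 0)]
          apply Finset.prod_pos
          intro k _
          calc (0:ℝ) = A := hA0
            _ < _ := hmt k ▸ hcon k
        · calc A ^ n = ∏ _k : Fin n, A := by
                rw [Finset.prod_const, Finset.card_univ, Fintype.card_fin]
            _ < ∏ k : Fin n, (t k ^ β * powerFun Φ (Xset x (n+1+k)) (x (n+1+k+1))) :=
                Finset.prod_lt_prod_of_nonempty (fun _ _ => hA0)
                  (fun k _ => hmt k ▸ hcon k) Finset.univ_nonempty
      linarith
    -- use the selected index
    obtain ⟨k, hmk⟩ := claim1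
    have hi0mem : (n+1+(k:ℕ)) ∈ Finset.Icc (n+1) (2*n) :=
      Finset.mem_Icc.mpr ⟨by omega, by have := k.isLt; omega⟩
    have hRmono : ‖f - interp Φ (Xset x (n+1+(k:ℕ))) f‖ ≤ R :=
      residual_mono Φ x f (by omega)
    have hper := per_index_bound Φ hΦ β γ hβ hγ0 hγ1 f x hx (n+1+(k:ℕ)) R hRmono
    have hμpos : (0:ℝ) < max 1 β := lt_of_lt_of_le one_pos (le_max_left _ _)
    have hmnn : (0:ℝ) ≤ |⟪f - interp Φ (Xset x (n+1+(k:ℕ))) f, Φ (x (n+1+(k:ℕ)+1))⟫| ^ β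
        * powerFun Φ (Xset x (n+1+(k:ℕ))) (x (n+1+(k:ℕ)+1)) ^ (1-β) :=
      mul_nonneg (Real.rpow_nonneg (abs_nonneg _) _)
        (Real.rpow_nonneg (powerFun_nonneg Φ _ _) _)
    have hmono2 : (|⟪f - interp Φ (Xset x (n+1+(k:ℕ))) f, Φ (x (n+1+(k:ℕ)+1))⟫| ^ β
          * powerFun Φ (Xset x (n+1+(k:ℕ))) (x (n+1+(k:ℕ)+1)) ^ (1-β)) ^ (1 / max 1 β)
        ≤ A ^ (1 / max 1 β) :=
      Real.rpow_le_rpow hmnn hmk (by positivity)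
    have hAsplit : A ^ (1 / max 1 β)
        = (C * Real.sqrt 5) ^ (1 / max 1 β) * ((n:ℝ) ^ (-ρ - β/2)) ^ (1 / max 1 β)
          * (R ^ β) ^ (1 / max 1 β) := by
      rw [hAdef, Real.mul_rpow (by positivity) (by positivity),
        Real.mul_rpow (by positivity) (by positivity)]
    have hRcomb : (R ^ β) ^ (1 / max 1 β) * R ^ (1 - β / max 1 β) = R := by
      rw [← Real.rpow_mul hRpos.le, ← Real.rpow_add hRpos,
        show β * (1 / max 1 β) + (1 - β / max 1 β) = 1 by
          rw [mul_one_div]; ring, Real.rpow_one]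
    have hfinal : γ⁻¹ * ((|⟪f - interp Φ (Xset x (n+1+(k:ℕ))) f, Φ (x (n+1+(k:ℕ)+1))⟫| ^ β
          * powerFun Φ (Xset x (n+1+(k:ℕ))) (x (n+1+(k:ℕ)+1)) ^ (1-β)) ^ (1 / max 1 β))
          * R ^ (1 - β / max 1 β)
        ≤ (C * Real.sqrt 5) ^ (1 / max 1 β) * γ⁻¹
            * ((n:ℝ) ^ (-ρ - β/2)) ^ (1 / max 1 β) * R := by
      calc γ⁻¹ * ((|⟪f - interp Φ (Xset x (n+1+(k:ℕ))) f, Φ (x (n+1+(k:ℕ)+1))⟫| ^ β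
            * powerFun Φ (Xset x (n+1+(k:ℕ))) (x (n+1+(k:ℕ)+1)) ^ (1-β)) ^ (1 / max 1 β))
            * R ^ (1 - β / max 1 β)
          ≤ γ⁻¹ * A ^ (1 / max 1 β) * R ^ (1 - β / max 1 β) := by
            apply mul_le_mul_of_nonneg_right
              (mul_le_mul_of_nonneg_left hmono2 (by positivity))
              (Real.rpow_nonneg hRpos.le _)
        _ = (C * Real.sqrt 5) ^ (1 / max 1 β) * γ⁻¹
            * ((n:ℝ) ^ (-ρ - β/2)) ^ (1 / max 1 β) * R := by
            rw [hAsplit]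
            rw [show γ⁻¹ * ((C * Real.sqrt 5) ^ (1 / max 1 β)
                * ((n:ℝ) ^ (-ρ - β/2)) ^ (1 / max 1 β) * (R ^ β) ^ (1 / max 1 β))
                * R ^ (1 - β / max 1 β)
                = (C * Real.sqrt 5) ^ (1 / max 1 β) * γ⁻¹
                  * ((n:ℝ) ^ (-ρ - β/2)) ^ (1 / max 1 β)
                  * ((R ^ β) ^ (1 / max 1 β) * R ^ (1 - β / max 1 β)) by ring, hRcomb]
    calc (Finset.Icc (n + 1) (2 * n)).inf' (Finset.nonempty_Icc.mpr (by omega))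
          (fun i => supNorm Φ (f - interp Φ (Xset x i) f))
        ≤ supNorm Φ (f - interp Φ (Xset x (n+1+(k:ℕ))) f) := Finset.inf'_le _ hi0mem
      _ ≤ γ⁻¹ * ((|⟪f - interp Φ (Xset x (n+1+(k:ℕ))) f, Φ (x (n+1+(k:ℕ)+1))⟫| ^ β
            * powerFun Φ (Xset x (n+1+(k:ℕ))) (x (n+1+(k:ℕ)+1)) ^ (1-β)) ^ (1 / max 1 β))
            * R ^ (1 - β / max 1 β) := hper
      _ ≤ (C * Real.sqrt 5) ^ (1 / max 1 β) * γ⁻¹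
            * ((n:ℝ) ^ (-ρ - β/2)) ^ (1 / max 1 β) * R := hfinal
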